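/- If b : ℝ → ℝ is twice continuously differentiable with b(0) ≥ 0 and ḃ(0) + p·b(0) ≥ 0, and for all t ≥ 0, b̈(t) + 2p·ḃ(t) + p²·b(t) ≥ 0 with p > 0, then b(t) ≥ 0 and ḃ(t) + p·b(t) ≥ 0 for all t ≥ 0. -/

import Mathlib

lemma aux_gronwall (f : ℝ → ℝ) (p : ℝ) (hf : Differentiable ℝ f)
    (h0 : 0 ≤ f 0) (h : ∀ t, 0 ≤ t → 0 ≤ deriv f t + p * f t) :
    ∀ t, 0 ≤ t → 0 ≤ f t := by
  intro t ht
  set g : ℝ → ℝ := fun s => Real.exp (p * s) * f s with hg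
  have hder : ∀ s : ℝ, HasDerivAt g (Real.exp (p * s) * (deriv f s + p * f s)) s := by
    intro s
    have h1 : HasDerivAt (fun s : ℝ => Real.exp (p * s)) (Real.exp (p * s) * p) s := by
      simpa using ((hasDerivAt_id s).const_mul p).exp
    have h2 : HasDerivAt f (deriv f s) s := (hf s).hasDerivAt
    have := h1.mul h2
    rw [show Real.exp (p * s) * (deriv f s + p * f s) = Real.exp (p * s) * p * f s + Real.exp (p * s) * deriv f s by ring]
    exact this
  have hmono : MonotoneOn g (Set.Ici (0 : ℝ)) := by
    apply monotoneOn_of_deriv_nonneg (convex_Ici 0)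
      (Continuous.continuousOn (by
        exact (Real.continuous_exp.comp (continuous_const.mul continuous_id)).mul hf.continuous))
    · intro s hs
      exact (hder s).differentiableAt.differentiableWithinAt
    · intro s hs
      rw [interior_Ici] at hs
      rw [(hder s).deriv]
      exact mul_nonneg (Real.exp_nonneg _) (h s hs.le)
  have hg0 : 0 ≤ g 0 := by simpa [hg] using h0
  have : 0 ≤ g t := le_trans hg0 (hmono (Set.mem_Ici.mpr le_rfl) ht ht)
  have hexp : 0 < Real.exp (p * t) := Real.exp_pos _
  simp only [hg] at this
  nlinarith [this, hexp]

/-- Second-order HOCBF forward invariance with linear class K functions: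
if `b(0) ≥ 0`, `ḃ(0) + p·b(0) ≥ 0` and `b̈ + 2p·ḃ + p²·b ≥ 0` on `[0,∞)`,
then `b ≥ 0` and `ḃ + p·b ≥ 0` on `[0,∞)`. -/
theorem hocbf_forward_invariance (b : ℝ → ℝ) (p : ℝ) (hp : 0 < p)
    (hb : ContDiff ℝ 2 b) (h0 : 0 ≤ b 0) (h1 : deriv b 0 + p * b 0 ≥ 0)
    (hineq : ∀ t : ℝ, 0 ≤ t →
      deriv (deriv b) t + 2 * p * deriv b t + p ^ 2 * b t ≥ 0) :
    ∀ t : ℝ, 0 ≤ t → 0 ≤ b t ∧ deriv b t + p * b t ≥ 0 := by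
  have hb1 : Differentiable ℝ b := hb.differentiable (by norm_num)
  have hb' : Differentiable ℝ (deriv b) := by
    have h2 : ContDiff ℝ (1 + 1) b := by norm_num at hb ⊢; exact hb
    have : ContDiff ℝ 1 (deriv b) := (contDiff_succ_iff_deriv.mp h2).2.2
    exact this.differentiable one_ne_zero
  set ψ : ℝ → ℝ := fun t => deriv b t + p * b t with hψ
  have hψdiff : Differentiable ℝ ψ := hb'.add (hb1.const_mul p)
  have hψderiv : ∀ t, deriv ψ t = deriv (deriv b) t + p * deriv b t := by
    intro t
    rw [hψ]
    exact ((hb' t).hasDerivAt.add ((hb1 t).hasDerivAt.const_mul p)).deriv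
  have hψnn : ∀ t, 0 ≤ t → 0 ≤ ψ t := by
    apply aux_gronwall ψ p hψdiff (by simpa [hψ] using h1)
    intro t ht
    rw [hψderiv t]
    have := hineq t ht
    simp only [hψ]
    nlinarith
  intro t ht
  refine ⟨?_, hψnn t ht⟩
  apply aux_gronwall b p hb1 h0 _ t ht
  intro s hs
  simpa [hψ] using hψnn s hs
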